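/- Let (Λ, ℒ, ℓ) be a probability space with ℓ atomless, and let {D_n : n ∈ ℕ} be a countable family of sets in ℒ. Then there exists a countably generated σ-algebra 𝒟 ⊆ ℒ such that each D_n belongs to 𝒟 and the restriction of ℓ to 𝒟 is atomless. -/

import Mathlib

open MeasureTheory Set ENNReal

private lemma exists_small_aux {Λ : Type*} [mΛ : MeasurableSpace Λ] (ℓ : Measure Λ)
    [IsProbabilityMeasure ℓ]
    (hat : ∀ L : Set Λ, MeasurableSet L → 0 < ℓ L →
      ∃ L' : Set Λ, MeasurableSet L' ∧ L' ⊆ L ∧ 0 < ℓ L' ∧ ℓ L' < ℓ L)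
    (C : Set Λ) (hC : MeasurableSet C) (hpos : 0 < ℓ C) {ε : ℝ≥0∞} (hε : 0 < ε) :
    ∃ B, MeasurableSet B ∧ B ⊆ C ∧ 0 < ℓ B ∧ ℓ B ≤ ε := by
  have key : ∀ n : ℕ, ∃ B, MeasurableSet B ∧ B ⊆ C ∧ 0 < ℓ B ∧ ℓ B ≤ 2⁻¹ ^ n := by
    intro n
    induction n with
    | zero => exact ⟨C, hC, subset_rfl, hpos, by simpa using (prob_le_one : ℓ C ≤ 1)⟩
    | succ n ih =>
      obtain ⟨B, hBmeas, hBsub, hBpos, hBle⟩ := ih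
      obtain ⟨B', hB'meas, hB'sub, hB'pos, hB'lt⟩ := hat B hBmeas hBpos
      have hdiff : ℓ (B \ B') = ℓ B - ℓ B' :=
        measure_diff hB'sub hB'meas.nullMeasurableSet (measure_ne_top ℓ B')
      have hhalf : (2:ℝ≥0∞)⁻¹ ^ n / 2 = 2⁻¹ ^ (n + 1) := by
        rw [pow_succ, div_eq_mul_inv]
      by_cases hle : ℓ B' ≤ ℓ B / 2
      · refine ⟨B', hB'meas, hB'sub.trans hBsub, hB'pos, ?_⟩
        calc ℓ B' ≤ ℓ B / 2 := hle
          _ ≤ 2⁻¹ ^ n / 2 := ENNReal.div_le_div_right hBle 2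
          _ = 2⁻¹ ^ (n + 1) := hhalf
      · refine ⟨B \ B', hBmeas.diff hB'meas, diff_subset.trans hBsub, ?_, ?_⟩
        · rw [hdiff]; exact tsub_pos_of_lt hB'lt
        · calc ℓ (B \ B') = ℓ B - ℓ B' := hdiff
            _ ≤ ℓ B - ℓ B / 2 := tsub_le_tsub_left (le_of_lt (not_le.mp hle)) _
            _ = ℓ B / 2 := ENNReal.sub_half (measure_ne_top ℓ B)
            _ ≤ 2⁻¹ ^ n / 2 := ENNReal.div_le_div_right hBle 2
            _ = 2⁻¹ ^ (n + 1) := hhalf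
  obtain ⟨n, hn⟩ := ENNReal.exists_inv_two_pow_lt hε.ne'
  obtain ⟨B, h1, h2, h3, h4⟩ := key n
  exact ⟨B, h1, h2, h3, h4.trans hn.le⟩

private lemma exists_half_aux {Λ : Type*} [mΛ : MeasurableSpace Λ] (ℓ : Measure Λ)
    [IsProbabilityMeasure ℓ]
    (hat : ∀ L : Set Λ, MeasurableSet L → 0 < ℓ L →
      ∃ L' : Set Λ, MeasurableSet L' ∧ L' ⊆ L ∧ 0 < ℓ L' ∧ ℓ L' < ℓ L)
    (C : Set Λ) (hC : MeasurableSet C) :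
    ∃ B, MeasurableSet B ∧ B ⊆ C ∧ ℓ B = ℓ C / 2 := by
  rcases eq_or_lt_of_le (zero_le : (0:ℝ≥0∞) ≤ ℓ C) with h0 | hpos
  · exact ⟨∅, MeasurableSet.empty, empty_subset C, by simp [← h0]⟩
  set c := ℓ C with hc
  have hcne : c ≠ ∞ := measure_ne_top ℓ C
  have hc1 : c ≤ 1 := prob_le_one
  -- greedy step: a near-maximal admissible extension
  have hstep : ∀ B : Set Λ, MeasurableSet B → B ⊆ C → ℓ B ≤ c / 2 →
      ∃ E, MeasurableSet E ∧ E ⊆ C \ B ∧ ℓ B + ℓ E ≤ c / 2 ∧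
        ∀ E', MeasurableSet E' → E' ⊆ C \ B → ℓ B + ℓ E' ≤ c / 2 → ℓ E' ≤ 2 * ℓ E := by
    intro B hBm hBs hBle
    set P : Set Λ → Prop := fun E' => MeasurableSet E' ∧ E' ⊆ C \ B ∧ ℓ B + ℓ E' ≤ c / 2 with hP
    set s : ℝ≥0∞ := ⨆ E' : {E' // P E'}, ℓ E'.1 with hs
    have hsle : s ≤ c / 2 := by
      refine iSup_le fun E' => ?_
      exact le_trans (le_add_self) E'.2.2.2
    have hsne : s ≠ ∞ :=
      ne_top_of_le_ne_top (ENNReal.div_lt_top hcne two_ne_zero).ne hsle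
    by_cases hs0 : s = 0
    · refine ⟨∅, MeasurableSet.empty, empty_subset _, by simpa using hBle, ?_⟩
      intro E' hE'm hE's hE'le
      have : ℓ E' ≤ s := le_iSup (fun E : {E // P E} => ℓ E.1) ⟨E', hE'm, hE's, hE'le⟩
      simp [hs0] at this
      simp [this]
    · have hlt : s / 2 < s := ENNReal.half_lt_self hs0 hsne
      rw [hs, lt_iSup_iff] at hlt
      obtain ⟨⟨E, hEP⟩, hE⟩ := hlt
      refine ⟨E, hEP.1, hEP.2.1, hEP.2.2, ?_⟩
      intro E' hE'm hE's hE'le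
      have h1 : ℓ E' ≤ s := le_iSup (fun E : {E // P E} => ℓ E.1) ⟨E', hE'm, hE's, hE'le⟩
      have h2 : s ≤ 2 * ℓ E := by
        calc s = 2 * (s / 2) := (ENNReal.mul_div_cancel two_ne_zero ENNReal.ofNat_ne_top).symm
          _ ≤ 2 * ℓ E := by gcongr
      exact h1.trans h2
  choose! E hEmeas hEsub hEbound hEmax using hstep
  let T := {B : Set Λ // MeasurableSet B ∧ B ⊆ C ∧ ℓ B ≤ c / 2}
  let step : T → T := fun B =>
    ⟨B.1 ∪ E B.1, (B.2.1.union (hEmeas B.1 B.2.1 B.2.2.1 B.2.2.2)),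
      union_subset B.2.2.1 ((hEsub B.1 B.2.1 B.2.2.1 B.2.2.2).trans diff_subset),
      by
        have hd : Disjoint B.1 (E B.1) :=
          Set.disjoint_sdiff_right.mono_right (hEsub B.1 B.2.1 B.2.2.1 B.2.2.2)
        rw [measure_union hd (hEmeas B.1 B.2.1 B.2.2.1 B.2.2.2)]
        exact hEbound B.1 B.2.1 B.2.2.1 B.2.2.2⟩
  let seq : ℕ → T := fun n => step^[n] ⟨∅, MeasurableSet.empty, empty_subset C, by simp⟩
  have hseq : ∀ n, seq (n + 1) = step (seq n) := fun n => Function.iterate_succ_apply' step n _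
  have hmono : Monotone fun n => (seq n).1 := by
    apply monotone_nat_of_le_succ
    intro n
    rw [hseq n]
    exact subset_union_left
  set Binf : Set Λ := ⋃ n, (seq n).1 with hBinf
  have hBmeas : MeasurableSet Binf := MeasurableSet.iUnion fun n => (seq n).2.1
  have hBsub : Binf ⊆ C := iUnion_subset fun n => (seq n).2.2.1
  have hBle : ℓ Binf ≤ c / 2 := by
    rw [hBinf, hmono.directed_le.measure_iUnion]
    exact iSup_le fun n => (seq n).2.2.2
  refine ⟨Binf, hBmeas, hBsub, ?_⟩
  by_contra hne
  have hlt : ℓ Binf < c / 2 := lt_of_le_of_ne hBle hne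
  have hε : 0 < c / 2 - ℓ Binf := tsub_pos_of_lt hlt
  have hCBpos : 0 < ℓ (C \ Binf) := by
    rw [measure_diff hBsub hBmeas.nullMeasurableSet (measure_ne_top ℓ Binf)]
    exact tsub_pos_of_lt (hlt.trans_le (ENNReal.half_le_self))
  obtain ⟨F, hFmeas, hFsub, hFpos, hFle⟩ :=
    exists_small_aux ℓ hat (C \ Binf) (hC.diff hBmeas) hCBpos hε
  have helig : ∀ n, ℓ F ≤ 2 * ℓ (E (seq n).1) := by
    intro n
    refine hEmax (seq n).1 (seq n).2.1 (seq n).2.2.1 (seq n).2.2.2 F hFmeas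
      (hFsub.trans (diff_subset_diff_right (subset_iUnion (fun n => (seq n).1) n))) ?_
    calc ℓ (seq n).1 + ℓ F ≤ ℓ Binf + (c / 2 - ℓ Binf) :=
          add_le_add (measure_mono (subset_iUnion (fun n => (seq n).1) n)) hFle
      _ = c / 2 := add_tsub_cancel_of_le hlt.le
  have hgrow : ∀ n, ℓ ((seq (n + 1)).1) = ℓ ((seq n).1) + ℓ (E (seq n).1) := by
    intro n
    rw [hseq n]
    exact measure_union (Set.disjoint_sdiff_right.mono_right
      (hEsub (seq n).1 (seq n).2.1 (seq n).2.2.1 (seq n).2.2.2))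
      (hEmeas (seq n).1 (seq n).2.1 (seq n).2.2.1 (seq n).2.2.2)
  have hn : ∀ n : ℕ, (n : ℝ≥0∞) * ℓ F ≤ 2 * ℓ ((seq n).1) := by
    intro n
    induction n with
    | zero => simp
    | succ n ih =>
      have : ((n + 1 : ℕ) : ℝ≥0∞) * ℓ F = (n : ℝ≥0∞) * ℓ F + ℓ F := by
        push_cast
        ring
      rw [this, hgrow n, mul_add]
      exact add_le_add ih (helig n)
  have hbound : ∀ n : ℕ, (n : ℝ≥0∞) * ℓ F ≤ 1 := by
    intro n
    calc (n : ℝ≥0∞) * ℓ F ≤ 2 * ℓ ((seq n).1) := hn n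
      _ ≤ 2 * (c / 2) := by gcongr; exact (seq n).2.2.2
      _ = c := ENNReal.mul_div_cancel two_ne_zero ENNReal.ofNat_ne_top
      _ ≤ 1 := hc1
  obtain ⟨n, hn'⟩ := ENNReal.exists_nat_mul_gt hFpos.ne' (one_ne_top)
  exact absurd (hbound n) (not_le.mpr hn')

private noncomputable def dyadicAux {Λ : Type*} (g : Set Λ → Set Λ) : ℕ → ℕ → Set Λ
  | 0, k => if k = 0 then Set.univ else ∅
  | n + 1, k =>
      if k % 2 = 0 then g (dyadicAux g n (k / 2))
      else dyadicAux g n (k / 2) \ g (dyadicAux g n (k / 2))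

theorem stmt_5 {Λ : Type*} [mΛ : MeasurableSpace Λ] (ℓ : Measure Λ) [IsProbabilityMeasure ℓ]
    (hatomless : ∀ L : Set Λ, MeasurableSet L → 0 < ℓ L →
      ∃ L' : Set Λ, MeasurableSet L' ∧ L' ⊆ L ∧ 0 < ℓ L' ∧ ℓ L' < ℓ L)
    (D : ℕ → Set Λ) (hD : ∀ n, MeasurableSet (D n)) :
    ∃ m : MeasurableSpace Λ, m ≤ mΛ ∧
      (∃ S : Set (Set Λ), S.Countable ∧ m = MeasurableSpace.generateFrom S) ∧
      (∀ n, MeasurableSet[m] (D n)) ∧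
      (∀ L : Set Λ, MeasurableSet[m] L → 0 < ℓ L →
        ∃ L' : Set Λ, MeasurableSet[m] L' ∧ L' ⊆ L ∧ 0 < ℓ L' ∧ ℓ L' < ℓ L) := by
  have hhalf : ∀ C : Set Λ, ∃ B, B ⊆ C ∧
      (MeasurableSet C → MeasurableSet B ∧ ℓ B = ℓ C / 2) := by
    intro C
    by_cases hC : MeasurableSet C
    · obtain ⟨B, h1, h2, h3⟩ := exists_half_aux ℓ hatomless C hC
      exact ⟨B, h2, fun _ => ⟨h1, h3⟩⟩
    · exact ⟨∅, empty_subset C, fun h => absurd h hC⟩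
  choose g hgsub hgspec using hhalf
  set A : ℕ → ℕ → Set Λ := dyadicAux g with hA
  have hA0 : ∀ k, A 0 k = if k = 0 then univ else ∅ := fun k => rfl
  have hAsucc : ∀ n k, A (n + 1) k =
      if k % 2 = 0 then g (A n (k / 2)) else A n (k / 2) \ g (A n (k / 2)) := fun n k => rfl
  have hAmeas : ∀ n k, MeasurableSet (A n k) := by
    intro n
    induction n with
    | zero =>
      intro k
      rw [hA0]
      by_cases hk : k = 0 <;> simp [hk]
    | succ n ih =>
      intro k
      rw [hAsucc]
      by_cases hk : k % 2 = 0
      · rw [if_pos hk]; exact (hgspec _ (ih (k / 2))).1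
      · rw [if_neg hk]; exact (ih (k / 2)).diff (hgspec _ (ih (k / 2))).1
  have hAle : ∀ n k, ℓ (A n k) ≤ 2⁻¹ ^ n := by
    intro n
    induction n with
    | zero =>
      intro k
      rw [hA0]
      by_cases hk : k = 0 <;> simp [hk, prob_le_one]
    | succ n ih =>
      intro k
      have hmeas := hAmeas n (k / 2)
      have hghalf : ℓ (g (A n (k / 2))) = ℓ (A n (k / 2)) / 2 := (hgspec _ hmeas).2
      have hpow : (2:ℝ≥0∞)⁻¹ ^ n / 2 = 2⁻¹ ^ (n + 1) := by
        rw [pow_succ, div_eq_mul_inv]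
      rw [hAsucc]
      by_cases hk : k % 2 = 0
      · rw [if_pos hk, hghalf, ← hpow]
        exact ENNReal.div_le_div_right (ih (k / 2)) 2
      · rw [if_neg hk]
        calc ℓ (A n (k / 2) \ g (A n (k / 2)))
            = ℓ (A n (k / 2)) - ℓ (g (A n (k / 2))) :=
              measure_diff (hgsub _) (hgspec _ hmeas).1.nullMeasurableSet (measure_ne_top ℓ _)
          _ = ℓ (A n (k / 2)) - ℓ (A n (k / 2)) / 2 := by rw [hghalf]
          _ = ℓ (A n (k / 2)) / 2 := ENNReal.sub_half (measure_ne_top ℓ _)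
          _ ≤ 2⁻¹ ^ n / 2 := ENNReal.div_le_div_right (ih (k / 2)) 2
          _ = 2⁻¹ ^ (n + 1) := hpow
  have hAcover : ∀ n, (⋃ k, A n k) = univ := by
    intro n
    induction n with
    | zero =>
      apply eq_univ_of_univ_subset
      intro x _
      exact mem_iUnion.mpr ⟨0, by rw [hA0]; simp⟩
    | succ n ih =>
      apply eq_univ_of_univ_subset
      rw [← ih]
      refine iUnion_subset fun j => ?_
      have h0 : A (n + 1) (2 * j) = g (A n j) := by
        rw [hAsucc, if_pos (by omega), show 2 * j / 2 = j by omega]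
      have h1 : A (n + 1) (2 * j + 1) = A n j \ g (A n j) := by
        rw [hAsucc, if_neg (by omega), show (2 * j + 1) / 2 = j by omega]
      intro x hx
      by_cases hg : x ∈ g (A n j)
      · exact mem_iUnion.mpr ⟨2 * j, h0 ▸ hg⟩
      · exact mem_iUnion.mpr ⟨2 * j + 1, h1 ▸ ⟨hx, hg⟩⟩
  set S : Set (Set Λ) :=
    Set.range (fun p : ℕ × ℕ => A p.1 p.2) ∪ Set.range D with hS
  refine ⟨MeasurableSpace.generateFrom S, ?_, ⟨S, ?_, rfl⟩, ?_, ?_⟩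
  · apply MeasurableSpace.generateFrom_le
    rintro t (⟨⟨n, k⟩, rfl⟩ | ⟨n, rfl⟩)
    · exact hAmeas n k
    · exact hD n
  · exact (Set.countable_range _).union (Set.countable_range _)
  · intro n
    exact MeasurableSpace.measurableSet_generateFrom (Or.inr ⟨n, rfl⟩)
  · intro L hL hLpos
    by_contra hcon
    push_neg at hcon
    obtain ⟨n, hn⟩ := ENNReal.exists_inv_two_pow_lt hLpos.ne'
    have hAm : ∀ k, MeasurableSet[MeasurableSpace.generateFrom S] (A n k) := fun k =>
      MeasurableSpace.measurableSet_generateFrom (Or.inl ⟨(n, k), rfl⟩)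
    have hzero : ∀ k, ℓ (L ∩ A n k) = 0 := by
      intro k
      by_contra hne
      have hpos : 0 < ℓ (L ∩ A n k) := pos_iff_ne_zero.mpr hne
      have hlt : ℓ (L ∩ A n k) < ℓ L :=
        lt_of_le_of_lt (le_trans (measure_mono inter_subset_right) (hAle n k)) hn
      exact absurd hlt (not_lt.mpr (hcon (L ∩ A n k) (hL.inter (hAm k))
        inter_subset_left hpos))
    have : ℓ L = 0 := by
      have hcov : L = ⋃ k, L ∩ A n k := by
        rw [← inter_iUnion, hAcover n, inter_univ]
      rw [hcov]
      exact le_antisymm ((measure_iUnion_le _).trans (by simp [hzero])) zero_le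
    exact absurd this hLpos.ne'
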